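/- There exist a constant C > 0 and an integer N₀ such that for every N ≥ N₀ and every δ ∈ ℝ: ‖S₀ B(δ)‖ ≤ C·(|δ| + δ²)/N, where ‖·‖ is the spectral norm. In particular, for each fixed δ, ‖S₀B(δ)‖ = O(1/N) as N → ∞. -/

import Mathlib

open Filter Matrix

/-- Hankelization (diagonal averaging): the `j`-th value is the average of the
entries `Y i k` with `i + k = j`. -/
noncomputable def hankelize {L K : ℕ} (Y : Matrix (Fin L) (Fin K) ℝ) (j : ℕ) : ℝ :=
  (∑ i : Fin L, ∑ k : Fin K, if (i : ℕ) + (k : ℕ) = j then Y i k else 0) /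
  (∑ i : Fin L, ∑ k : Fin K, if (i : ℕ) + (k : ℕ) = j then (1 : ℝ) else 0)

/-- Squared Euclidean norm of a vector. -/
noncomputable def normSq {M : ℕ} (w : Fin M → ℝ) : ℝ := ∑ i, w i ^ 2

/-- `u` is a unit eigenvector of `A` corresponding to its largest eigenvalue. -/
def IsTopEigenvector {L : ℕ} (A : Matrix (Fin L) (Fin L) ℝ) (u : Fin L → ℝ) : Prop :=
  normSq u = 1 ∧ ∃ μ : ℝ, A.mulVec u = μ • u ∧
    ∀ (ν : ℝ) (v : Fin L → ℝ), v ≠ 0 → A.mulVec v = ν • v → ν ≤ μ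

/-- The discretized exponential signal `x_n = a^{nT/N}`. -/
noncomputable def xdisc (a T : ℝ) (N : ℕ) : ℕ → ℝ := fun n => a ^ ((n : ℝ) * T / (N : ℝ))

/-- The `L × K` Hankel matrix of the discretized signal. -/
noncomputable def Hd (a T : ℝ) (N L K : ℕ) : Matrix (Fin L) (Fin K) ℝ :=
  Matrix.of fun i k => xdisc a T N ((i : ℕ) + (k : ℕ))

/-- The `L × K` Hankel matrix of the harmonic noise `e_n = cos(ξ n + φ)`. -/
noncomputable def Ed (ξ φ : ℝ) (L K : ℕ) : Matrix (Fin L) (Fin K) ℝ :=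
  Matrix.of fun i k => Real.cos (ξ * (((i : ℕ) + (k : ℕ) : ℕ) : ℝ) + φ)

/-- The vector `W_M = (1, a^{T/N}, …, a^{(M-1)T/N})ᵀ`. -/
noncomputable def Wd (a T : ℝ) (N M : ℕ) : Fin M → ℝ := fun i => a ^ (((i : ℕ) : ℝ) * T / (N : ℝ))

/-- `B(δ) = δ(HEᵀ + EHᵀ) + δ²EEᵀ`. -/
noncomputable def Bmat (a T ξ φ δ : ℝ) (N L K : ℕ) : Matrix (Fin L) (Fin L) ℝ :=
  δ • (Hd a T N L K * (Ed ξ φ L K)ᵀ + Ed ξ φ L K * (Hd a T N L K)ᵀ)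
  + δ ^ 2 • (Ed ξ φ L K * (Ed ξ φ L K)ᵀ)

/-- The spectral (ℓ²-operator) norm of a matrix. -/
noncomputable def specNorm {m n : ℕ} (A : Matrix (Fin m) (Fin n) ℝ) : ℝ :=
  ‖(Matrix.toEuclideanLin A).toContinuousLinearMap‖

/-- The max-norm of a matrix: the maximum of the absolute values of its entries. -/
noncomputable def maxNorm {m n : ℕ} (A : Matrix (Fin m) (Fin n) ℝ) : ℝ :=
  ⨆ p : Fin m × Fin n, |A p.1 p.2|

set_option maxHeartbeats 1000000

open Complex in
lemma osc_sum_bound (z ξ θ : ℝ) (hz : 1 ≤ z) (hs : 0 < Real.sin ξ) (M : ℕ) :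
    |∑ i ∈ Finset.range M, z ^ i * Real.cos (ξ * i + θ)| ≤ (z ^ M + 1) / Real.sin ξ := by
  set w : ℂ := z * Complex.exp (ξ * I) with hw
  have habs : ‖w‖ = z := by
    rw [hw, norm_mul, Complex.norm_exp_ofReal_mul_I, mul_one, Complex.norm_real, Real.norm_eq_abs]
    exact abs_of_nonneg (by linarith)
  have him : w.im = z * Real.sin ξ := by
    simp [hw, Complex.exp_mul_I, Complex.mul_im, Complex.sin_ofReal_re]
  have hne : w ≠ 1 := by
    intro h
    have : w.im = 0 := by rw [h]; simp
    rw [him] at this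
    nlinarith
  have hdist : Real.sin ξ ≤ ‖w - 1‖ := by
    have h1 : |(w - 1).im| ≤ ‖w - 1‖ := Complex.abs_im_le_norm _
    have h2 : (w - 1).im = z * Real.sin ξ := by simp [him]
    rw [h2] at h1
    have : Real.sin ξ ≤ z * Real.sin ξ := by nlinarith
    calc Real.sin ξ ≤ z * Real.sin ξ := this
      _ ≤ |z * Real.sin ξ| := le_abs_self _
      _ ≤ _ := h1
  have hgeom : ∑ i ∈ Finset.range M, w ^ i = (w ^ M - 1) / (w - 1) := geom_sum_eq hne M
  have hre : ∑ i ∈ Finset.range M, z ^ i * Real.cos (ξ * i + θ)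
      = (Complex.exp (θ * I) * ∑ i ∈ Finset.range M, w ^ i).re := by
    rw [Finset.mul_sum, Complex.re_sum]
    apply Finset.sum_congr rfl
    intro i _
    have : Complex.exp (θ * I) * w ^ i
        = (z : ℂ) ^ i * Complex.exp ((ξ * i + θ) * I) := by
      rw [hw, mul_pow, ← Complex.exp_nat_mul]
      rw (config := { occs := .pos [1] }) [show cexp (↑θ * I) * ((z:ℂ) ^ i * cexp (↑i * (↑ξ * I))) = (z:ℂ) ^ i * (cexp (↑i * (↑ξ * I)) * cexp (↑θ * I)) by ring, ← Complex.exp_add]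
      congr 2
      push_cast
      ring
    rw [this]
    have : ((z : ℂ) ^ i * Complex.exp ((ξ * i + θ) * I)).re
        = z ^ i * Real.cos (ξ * i + θ) := by
      rw [Complex.exp_mul_I]
      have h1 : ((ξ : ℂ) * i + θ) = ((ξ * i + θ : ℝ) : ℂ) := by push_cast; ring
      rw [h1]
      simp only [Complex.mul_re, Complex.add_re, Complex.mul_im, Complex.add_im,
        Complex.I_re, Complex.I_im, ← Complex.ofReal_pow, Complex.cos_ofReal_re,
        Complex.sin_ofReal_im, Complex.cos_ofReal_im, Complex.sin_ofReal_re,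
        Complex.ofReal_re, Complex.ofReal_im]
      ring
    rw [this]
  rw [hre]
  calc |(Complex.exp (θ * I) * ∑ i ∈ Finset.range M, w ^ i).re|
      ≤ ‖Complex.exp (θ * I) * ∑ i ∈ Finset.range M, w ^ i‖ :=
        Complex.abs_re_le_norm _
    _ = ‖w ^ M - 1‖ / ‖w - 1‖ := by
        rw [norm_mul, Complex.norm_exp_ofReal_mul_I, one_mul, hgeom, norm_div]
    _ ≤ (z ^ M + 1) / Real.sin ξ := by
        apply div_le_div₀ (by positivity)
        · calc ‖w ^ M - 1‖ ≤ ‖w ^ M‖ + 1 := by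
                simpa using norm_sub_le (w ^ M) 1
            _ = z ^ M + 1 := by rw [norm_pow, habs]
        · exact hs
        · exact hdist

lemma osc_fin_bound (a T ξ θ : ℝ) (ha : 1 < a) (hT : 0 < T) (hs : 0 < Real.sin ξ)
    {N M : ℕ} (hN : 0 < N) (hM : M ≤ N) :
    |∑ i : Fin M, a ^ ((i : ℝ) * T / (N : ℝ)) * Real.cos (ξ * i + θ)|
      ≤ (a ^ T + 1) / Real.sin ξ := by
  have ha0 : (0:ℝ) ≤ a := by linarith
  have hNpos : (0:ℝ) < N := by exact_mod_cast hN
  have hTN : 0 ≤ T / (N:ℝ) := by positivity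
  set z := a ^ (T / (N:ℝ)) with hzdef
  have hz1 : 1 ≤ z := by
    rw [hzdef, show (1:ℝ) = a ^ (0:ℝ) by rw [Real.rpow_zero]]
    exact Real.rpow_le_rpow_of_exponent_le ha.le hTN
  have hpow : ∀ i : ℕ, a ^ ((i : ℝ) * T / (N : ℝ)) = z ^ i := by
    intro i
    rw [hzdef, ← Real.rpow_natCast (a ^ (T / (N:ℝ))) i, ← Real.rpow_mul ha0]
    congr 1
    ring
  have hzM : z ^ M ≤ a ^ T := by
    rw [hzdef, ← Real.rpow_natCast (a ^ (T / (N:ℝ))) M, ← Real.rpow_mul ha0]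
    apply Real.rpow_le_rpow_of_exponent_le ha.le
    rw [div_mul_eq_mul_div, mul_comm]
    rw [div_le_iff₀ hNpos]
    have : (M:ℝ) ≤ N := by exact_mod_cast hM
    nlinarith
  calc |∑ i : Fin M, a ^ ((i : ℝ) * T / (N : ℝ)) * Real.cos (ξ * i + θ)|
      = |∑ i ∈ Finset.range M, z ^ i * Real.cos (ξ * i + θ)| := by
        rw [Fin.sum_univ_eq_sum_range (fun i => a ^ ((i : ℝ) * T / (N : ℝ)) * Real.cos (ξ * i + θ))]
        congr 1
        exact Finset.sum_congr rfl fun i _ => by rw [hpow]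
    _ ≤ (z ^ M + 1) / Real.sin ξ := osc_sum_bound z ξ θ hz1 hs M
    _ ≤ (a ^ T + 1) / Real.sin ξ := by
        gcongr

lemma euclid_norm_eq {M : ℕ} (u : Fin M → ℝ) :
    ‖(WithLp.equiv 2 (Fin M → ℝ)).symm u‖ = Real.sqrt (normSq u) := by
  rw [EuclideanSpace.norm_eq]
  congr 1
  simp [normSq, sq_abs]

lemma specNorm_le {m n : ℕ} (A : Matrix (Fin m) (Fin n) ℝ) {c : ℝ} (hc : 0 ≤ c)
    (h : ∀ x : Fin n → ℝ, Real.sqrt (normSq (A.mulVec x)) ≤ c * Real.sqrt (normSq x)) :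
    specNorm A ≤ c := by
  apply ContinuousLinearMap.opNorm_le_bound _ hc
  intro x
  rw [LinearMap.coe_toContinuousLinearMap']
  have hx : x = (WithLp.equiv 2 (Fin n → ℝ)).symm ((WithLp.equiv 2 (Fin n → ℝ)) x) := rfl
  calc ‖toEuclideanLin A x‖ = Real.sqrt (normSq (A.mulVec ((WithLp.equiv 2 (Fin n → ℝ)) x))) := by
        rw [toEuclideanLin_apply]; exact euclid_norm_eq _
    _ ≤ c * Real.sqrt (normSq ((WithLp.equiv 2 (Fin n → ℝ)) x)) := h _
    _ = c * ‖x‖ := by rw [← euclid_norm_eq]; rfl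

lemma key_mul {L : ℕ} (c : ℝ) (u : Fin L → ℝ) (B : Matrix (Fin L) (Fin L) ℝ) :
    (c • vecMulVec u u) * B = c • vecMulVec u (vecMul u B) := by
  ext i j
  simp only [Matrix.smul_mul, Matrix.smul_apply, Matrix.mul_apply, vecMulVec_apply,
    vecMul, dotProduct, smul_eq_mul, Finset.mul_sum]
  exact Finset.sum_congr rfl fun k _ => by ring

lemma cauchy {K : ℕ} (v x : Fin K → ℝ) :
    |∑ j, v j * x j| ≤ Real.sqrt (normSq v) * Real.sqrt (normSq x) := by
  have hCS : (∑ j, v j * x j) ^ 2 ≤ normSq v * normSq x := by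
    simpa [normSq] using Finset.sum_mul_sq_le_sq_mul_sq Finset.univ v x
  have h0v : 0 ≤ normSq v := Finset.sum_nonneg fun i _ => sq_nonneg _
  have h0x : 0 ≤ normSq x := Finset.sum_nonneg fun i _ => sq_nonneg _
  calc |∑ j, v j * x j| = Real.sqrt ((∑ j, v j * x j) ^ 2) := (Real.sqrt_sq_eq_abs _).symm
    _ ≤ Real.sqrt (normSq v * normSq x) := Real.sqrt_le_sqrt hCS
    _ = _ := Real.sqrt_mul h0v _

lemma specNorm_smul_vecMulVec_le {L K : ℕ} (c : ℝ) (hc : 0 ≤ c) (u : Fin L → ℝ)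
    (v : Fin K → ℝ) :
    specNorm (c • vecMulVec u v) ≤ c * Real.sqrt (normSq u) * Real.sqrt (normSq v) := by
  apply specNorm_le _ (by positivity)
  intro x
  have hmv : (c • vecMulVec u v).mulVec x = fun i => (c * ∑ j, v j * x j) * u i := by
    funext i
    simp only [mulVec, dotProduct, Matrix.smul_apply, vecMulVec_apply, smul_eq_mul,
      Finset.mul_sum, Finset.sum_mul]
    exact Finset.sum_congr rfl fun k _ => by ring
  rw [hmv]
  have h1 : normSq (fun i => (c * ∑ j, v j * x j) * u i)
      = (c * ∑ j, v j * x j) ^ 2 * normSq u := by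
    simp [normSq, Finset.mul_sum, mul_pow]
  rw [h1, Real.sqrt_mul (sq_nonneg _), Real.sqrt_sq_eq_abs]
  have h2 : |c * ∑ j, v j * x j| ≤ c * (Real.sqrt (normSq v) * Real.sqrt (normSq x)) := by
    rw [abs_mul, abs_of_nonneg hc]
    exact mul_le_mul_of_nonneg_left (cauchy v x) hc
  have h0u : (0:ℝ) ≤ Real.sqrt (normSq u) := Real.sqrt_nonneg _
  calc |c * ∑ j, v j * x j| * Real.sqrt (normSq u)
      ≤ (c * (Real.sqrt (normSq v) * Real.sqrt (normSq x))) * Real.sqrt (normSq u) :=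
        mul_le_mul_of_nonneg_right h2 h0u
    _ = c * Real.sqrt (normSq u) * Real.sqrt (normSq v) * Real.sqrt (normSq x) := by ring

lemma normSq_sqrt_le {L : ℕ} (g : Fin L → ℝ) {D : ℝ} (hD : 0 ≤ D)
    (h : ∀ j, |g j| ≤ D) : Real.sqrt (normSq g) ≤ Real.sqrt L * D := by
  have : normSq g ≤ L * D ^ 2 := by
    calc normSq g ≤ ∑ _j : Fin L, D ^ 2 := by
          apply Finset.sum_le_sum
          intro j _
          calc g j ^ 2 = |g j| ^ 2 := (sq_abs _).symm
            _ ≤ D ^ 2 := by gcongr; exact h j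
      _ = L * D ^ 2 := by simp [mul_comm]
  calc Real.sqrt (normSq g) ≤ Real.sqrt ((L : ℝ) * D ^ 2) := Real.sqrt_le_sqrt this
    _ = Real.sqrt L * D := by
        rw [Real.sqrt_mul (by positivity), Real.sqrt_sq_eq_abs, abs_of_nonneg hD]

lemma sum_swap_prod {L K : ℕ} (u : Fin L → ℝ) (A : Matrix (Fin L) (Fin K) ℝ)
    (f : Fin K → ℝ) :
    ∑ i, u i * ∑ k, A i k * f k = ∑ k, (∑ i, u i * A i k) * f k := by
  simp_rw [Finset.mul_sum, Finset.sum_mul, mul_assoc]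
  exact Finset.sum_comm

lemma Hd_eq (a T : ℝ) (ha : 0 < a) (N L K : ℕ) (i : Fin L) (k : Fin K) :
    Hd a T N L K i k = Wd a T N L i * Wd a T N K k := by
  simp only [Hd, Wd, xdisc, Matrix.of_apply]
  rw [← Real.rpow_add ha]
  congr 1
  push_cast
  ring

lemma vecMul_Bmat (a T ξ φ δ : ℝ) (ha : 0 < a) (N L K : ℕ) (j : Fin L) :
    vecMul (Wd a T N L) (Bmat a T ξ φ δ N L K) j
    = δ * ((normSq (Wd a T N L)) * (∑ k, Wd a T N K k * Ed ξ φ L K j k)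
        + Wd a T N L j * (∑ k, vecMul (Wd a T N L) (Ed ξ φ L K) k * Wd a T N K k))
      + δ ^ 2 * (∑ k, vecMul (Wd a T N L) (Ed ξ φ L K) k * Ed ξ φ L K j k) := by
  have step1 : vecMul (Wd a T N L) (Bmat a T ξ φ δ N L K) j
      = δ * (∑ i, Wd a T N L i * ∑ k, Hd a T N L K i k * Ed ξ φ L K j k)
        + δ * (∑ i, Wd a T N L i * ∑ k, Ed ξ φ L K i k * Hd a T N L K j k)
        + δ ^ 2 * (∑ i, Wd a T N L i * ∑ k, Ed ξ φ L K i k * Ed ξ φ L K j k) := by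
    simp only [vecMul, dotProduct, Bmat, Matrix.add_apply, Matrix.smul_apply,
      Matrix.mul_apply, Matrix.transpose_apply, smul_eq_mul]
    rw [Finset.mul_sum, Finset.mul_sum, Finset.mul_sum, ← Finset.sum_add_distrib,
      ← Finset.sum_add_distrib]
    refine Finset.sum_congr rfl fun i _ => ?_
    ring
  have hA1 : ∑ i, Wd a T N L i * ∑ k, Hd a T N L K i k * Ed ξ φ L K j k
      = normSq (Wd a T N L) * ∑ k, Wd a T N K k * Ed ξ φ L K j k := by
    rw [sum_swap_prod, Finset.mul_sum]
    refine Finset.sum_congr rfl fun k _ => ?_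
    have h : ∑ i, Wd a T N L i * Hd a T N L K i k = normSq (Wd a T N L) * Wd a T N K k := by
      simp only [normSq, Finset.sum_mul]
      refine Finset.sum_congr rfl fun i _ => ?_
      rw [Hd_eq a T ha]
      ring
    rw [h]
    ring
  have hA2 : ∑ i, Wd a T N L i * ∑ k, Ed ξ φ L K i k * Hd a T N L K j k
      = Wd a T N L j * ∑ k, vecMul (Wd a T N L) (Ed ξ φ L K) k * Wd a T N K k := by
    rw [sum_swap_prod, Finset.mul_sum]
    refine Finset.sum_congr rfl fun k _ => ?_
    rw [Hd_eq a T ha]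
    simp only [vecMul, dotProduct]
    ring
  have hA3 : ∑ i, Wd a T N L i * ∑ k, Ed ξ φ L K i k * Ed ξ φ L K j k
      = ∑ k, vecMul (Wd a T N L) (Ed ξ φ L K) k * Ed ξ φ L K j k := by
    rw [sum_swap_prod]
    refine Finset.sum_congr rfl fun k _ => ?_
    simp only [vecMul, dotProduct]
  rw [step1, hA1, hA2, hA3]
  ring

/-- in the discretization scheme,
`‖S₀B(δ)‖ ≤ C(|δ| + δ²)/N`; in particular `‖S₀B(δ)‖ = O(1/N)` for fixed `δ`. -/
theorem stmt_13 (a T ξ φ α : ℝ) (ha : 1 < a) (hT : 0 < T)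
    (hξ : ξ ∈ Set.Ioo 0 Real.pi) (hφ : φ ∈ Set.Ico 0 (2 * Real.pi))
    (hα : α ∈ Set.Ioo (0 : ℝ) 1)
    (L K : ℕ → ℕ)
    (hLK : ∀ N, 3 ≤ N → 1 < L N ∧ 1 < K N ∧ L N + K N = N + 1)
    (hlim : Tendsto (fun N : ℕ => (L N : ℝ) / (N : ℝ)) atTop (nhds α)) :
    ∃ C > (0 : ℝ), ∃ N₀ : ℕ, ∀ N, N₀ ≤ N → ∀ δ : ℝ,
      specNorm
        ((((normSq (Wd a T N (L N))) ^ 2 * normSq (Wd a T N (K N)))⁻¹ •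
            Matrix.vecMulVec (Wd a T N (L N)) (Wd a T N (L N))) *
          Bmat a T ξ φ δ N (L N) (K N)) ≤
      C * (|δ| + δ ^ 2) / (N : ℝ) := by
  obtain ⟨hα0, hα1⟩ := hα
  obtain ⟨hξ0, hξπ⟩ := hξ
  have ha0 : (0:ℝ) < a := by linarith
  have hsin : 0 < Real.sin ξ := Real.sin_pos_of_pos_of_lt_pi hξ0 hξπ
  have hAT1 : 1 ≤ a ^ T := by
    rw [show (1:ℝ) = a ^ (0:ℝ) by rw [Real.rpow_zero]]
    exact Real.rpow_le_rpow_of_exponent_le ha.le hT.le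
  set C₁ := (a ^ T + 1) / Real.sin ξ with hC₁def
  have hC₁pos : 0 < C₁ := div_pos (by linarith) hsin
  set β := min α (1 - α) / 2 with hβdef
  have hβα : β ≤ α / 2 := by
    rw [hβdef]
    have : min α (1 - α) ≤ α := min_le_left _ _
    linarith
  have hβα' : β ≤ (1 - α) / 2 := by
    rw [hβdef]
    have : min α (1 - α) ≤ 1 - α := min_le_right _ _
    linarith
  have hβpos : 0 < β := by
    rw [hβdef]
    have : 0 < min α (1 - α) := lt_min hα0 (by linarith)
    linarith
  refine ⟨2 * (a ^ T) ^ 2 * C₁ / β ^ 2, by positivity, ?_⟩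
  rw [Metric.tendsto_atTop] at hlim
  obtain ⟨N₁, hN₁⟩ := hlim β hβpos
  refine ⟨max N₁ 3, fun N hN δ => ?_⟩
  have hN3 : 3 ≤ N := le_trans (le_max_right _ _) hN
  obtain ⟨hL1, hK1, hLKsum⟩ := hLK N hN3
  have hNpos : (0:ℝ) < N := by
    have : 0 < N := by omega
    exact_mod_cast this
  have hLleN : L N ≤ N := by omega
  have hKleN : K N ≤ N := by omega
  have hdist := hN₁ N (le_trans (le_max_left _ _) hN)
  rw [Real.dist_eq, abs_lt] at hdist
  have hLlow : β * N ≤ (L N : ℝ) := by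
    have h2 : α - β < (L N : ℝ) / N := by linarith [hdist.1]
    have h3 : (α - β) * N < L N := (lt_div_iff₀ hNpos).mp h2
    nlinarith [hβα]
  have hKlow : β * N ≤ (K N : ℝ) := by
    have hKval : (K N : ℝ) = N + 1 - L N := by
      have : (L N : ℝ) + K N = N + 1 := by exact_mod_cast hLKsum
      linarith
    have h2 : (L N : ℝ) / N < α + β := by linarith [hdist.2]
    have h3 : (L N : ℝ) < (α + β) * N := by
      rw [div_lt_iff₀ hNpos] at h2
      linarith
    nlinarith [hβα']
  -- pointwise bounds on the vectors
  have hu_pos : ∀ M : ℕ, ∀ i : Fin M, 1 ≤ Wd a T N M i := by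
    intro M i
    rw [Wd, show (1:ℝ) = a ^ (0:ℝ) by rw [Real.rpow_zero]]
    exact Real.rpow_le_rpow_of_exponent_le ha.le (by positivity)
  have hu_le : ∀ (M : ℕ), M ≤ N → ∀ i : Fin M, Wd a T N M i ≤ a ^ T := by
    intro M hM i
    rw [Wd]
    apply Real.rpow_le_rpow_of_exponent_le ha.le
    rw [div_le_iff₀ hNpos]
    have hi : (i : ℝ) ≤ N := by
      have : (i : ℕ) < N := lt_of_lt_of_le i.isLt hM
      exact_mod_cast this.le
    nlinarith [hT.le]
  have hP_ge : (L N : ℝ) ≤ normSq (Wd a T N (L N)) := by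
    rw [normSq]
    calc (L N : ℝ) = ∑ _i : Fin (L N), (1:ℝ) := by simp
      _ ≤ _ := Finset.sum_le_sum fun i _ =>
          le_trans (hu_pos (L N) i) (le_self_pow₀ (hu_pos (L N) i) two_ne_zero)
  have hQ_ge : (K N : ℝ) ≤ normSq (Wd a T N (K N)) := by
    rw [normSq]
    calc (K N : ℝ) = ∑ _i : Fin (K N), (1:ℝ) := by simp
      _ ≤ _ := Finset.sum_le_sum fun i _ =>
          le_trans (hu_pos (K N) i) (le_self_pow₀ (hu_pos (K N) i) two_ne_zero)
  have hP_le : normSq (Wd a T N (L N)) ≤ (L N : ℝ) * (a ^ T) ^ 2 := by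
    rw [normSq]
    calc ∑ i : Fin (L N), Wd a T N (L N) i ^ 2 ≤ ∑ _i : Fin (L N), (a ^ T) ^ 2 :=
          Finset.sum_le_sum fun i _ => by
            have h1 := hu_pos (L N) i
            have h2 := hu_le (L N) hLleN i
            exact pow_le_pow_left₀ (by linarith) h2 2
      _ = (L N : ℝ) * (a ^ T) ^ 2 := by simp [mul_comm]
  have hβN : 0 < β * N := mul_pos hβpos hNpos
  have hPpos : 0 < normSq (Wd a T N (L N)) := by linarith
  have hQpos : 0 < normSq (Wd a T N (K N)) := by linarith
  -- oscillation bounds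
  have hEw : ∀ j : Fin (L N), |∑ k, Wd a T N (K N) k * Ed ξ φ (L N) (K N) j k| ≤ C₁ := by
    intro j
    have e : ∑ k, Wd a T N (K N) k * Ed ξ φ (L N) (K N) j k
        = ∑ k : Fin (K N), a ^ ((k : ℝ) * T / (N : ℝ)) * Real.cos (ξ * k + (ξ * j + φ)) := by
      refine Finset.sum_congr rfl fun k _ => ?_
      rw [Wd, Ed]
      simp only [Matrix.of_apply]
      congr 1
      congr 1
      push_cast
      ring
    rw [e, hC₁def]
    exact osc_fin_bound a T ξ (ξ * j + φ) ha hT hsin (by omega) hKleN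
  have hg : ∀ k : Fin (K N), |vecMul (Wd a T N (L N)) (Ed ξ φ (L N) (K N)) k| ≤ C₁ := by
    intro k
    have e : vecMul (Wd a T N (L N)) (Ed ξ φ (L N) (K N)) k
        = ∑ i : Fin (L N), a ^ ((i : ℝ) * T / (N : ℝ)) * Real.cos (ξ * i + (ξ * k + φ)) := by
      rw [vecMul, dotProduct]
      refine Finset.sum_congr rfl fun i _ => ?_
      rw [Wd, Ed]
      simp only [Matrix.of_apply]
      congr 1
      congr 1
      push_cast
      ring
    rw [e, hC₁def]
    exact osc_fin_bound a T ξ (ξ * k + φ) ha hT hsin (by omega) hLleN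
  -- component bound on vecMul u B
  set P := normSq (Wd a T N (L N)) with hPdef
  set D := |δ| * (P * C₁ + (K N : ℝ) * (C₁ * (a ^ T) ^ 2)) + δ ^ 2 * ((K N : ℝ) * C₁)
    with hDdef
  have hDnn : 0 ≤ D := by positivity
  have hcomp : ∀ j, |vecMul (Wd a T N (L N)) (Bmat a T ξ φ δ N (L N) (K N)) j| ≤ D := by
    intro j
    rw [vecMul_Bmat a T ξ φ δ ha0 N (L N) (K N) j]
    have hX2 : |∑ k, vecMul (Wd a T N (L N)) (Ed ξ φ (L N) (K N)) k * Wd a T N (K N) k|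
        ≤ (K N : ℝ) * (C₁ * a ^ T) := by
      calc |∑ k, vecMul (Wd a T N (L N)) (Ed ξ φ (L N) (K N)) k * Wd a T N (K N) k|
          ≤ ∑ k, |vecMul (Wd a T N (L N)) (Ed ξ φ (L N) (K N)) k * Wd a T N (K N) k| :=
            Finset.abs_sum_le_sum_abs _ _
        _ ≤ ∑ _k : Fin (K N), C₁ * a ^ T := by
            refine Finset.sum_le_sum fun k _ => ?_
            rw [abs_mul]
            have h1 := hg k
            have h2 := hu_le (K N) hKleN k
            have h3 := hu_pos (K N) k
            have h4 : |Wd a T N (K N) k| ≤ a ^ T := by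
              rw [abs_of_nonneg (by linarith)]; exact h2
            exact mul_le_mul h1 h4 (abs_nonneg _) hC₁pos.le
        _ = (K N : ℝ) * (C₁ * a ^ T) := by simp [mul_comm]
    have hX3 : |∑ k, vecMul (Wd a T N (L N)) (Ed ξ φ (L N) (K N)) k * Ed ξ φ (L N) (K N) j k|
        ≤ (K N : ℝ) * C₁ := by
      calc |∑ k, vecMul (Wd a T N (L N)) (Ed ξ φ (L N) (K N)) k * Ed ξ φ (L N) (K N) j k|
          ≤ ∑ k, |vecMul (Wd a T N (L N)) (Ed ξ φ (L N) (K N)) k * Ed ξ φ (L N) (K N) j k| :=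
            Finset.abs_sum_le_sum_abs _ _
        _ ≤ ∑ _k : Fin (K N), C₁ := by
            refine Finset.sum_le_sum fun k _ => ?_
            rw [abs_mul]
            have h1 := hg k
            have h2 : |Ed ξ φ (L N) (K N) j k| ≤ 1 := by
              rw [Ed]; simp only [Matrix.of_apply]; exact Real.abs_cos_le_one _
            calc |vecMul (Wd a T N (L N)) (Ed ξ φ (L N) (K N)) k| * |Ed ξ φ (L N) (K N) j k|
                ≤ C₁ * 1 := mul_le_mul h1 h2 (abs_nonneg _) hC₁pos.le
              _ = C₁ := mul_one _
        _ = (K N : ℝ) * C₁ := by simp [mul_comm]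
    have huj : |Wd a T N (L N) j| ≤ a ^ T := by
      rw [abs_of_nonneg (by linarith [hu_pos (L N) j])]
      exact hu_le (L N) hLleN j
    have hX1 := hEw j
    rw [hDdef]
    calc |δ * (P * (∑ k, Wd a T N (K N) k * Ed ξ φ (L N) (K N) j k)
          + Wd a T N (L N) j * (∑ k, vecMul (Wd a T N (L N)) (Ed ξ φ (L N) (K N)) k * Wd a T N (K N) k))
          + δ ^ 2 * (∑ k, vecMul (Wd a T N (L N)) (Ed ξ φ (L N) (K N)) k * Ed ξ φ (L N) (K N) j k)|
        ≤ |δ| * (P * C₁ + a ^ T * ((K N : ℝ) * (C₁ * a ^ T)))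
          + δ ^ 2 * ((K N : ℝ) * C₁) := by
          have t1 : |δ * (P * (∑ k, Wd a T N (K N) k * Ed ξ φ (L N) (K N) j k)
              + Wd a T N (L N) j * (∑ k, vecMul (Wd a T N (L N)) (Ed ξ φ (L N) (K N)) k * Wd a T N (K N) k))|
              ≤ |δ| * (P * C₁ + a ^ T * ((K N : ℝ) * (C₁ * a ^ T))) := by
            rw [abs_mul]
            apply mul_le_mul_of_nonneg_left _ (abs_nonneg δ)
            calc |P * (∑ k, Wd a T N (K N) k * Ed ξ φ (L N) (K N) j k)
                + Wd a T N (L N) j * (∑ k, vecMul (Wd a T N (L N)) (Ed ξ φ (L N) (K N)) k * Wd a T N (K N) k)|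
                ≤ |P * (∑ k, Wd a T N (K N) k * Ed ξ φ (L N) (K N) j k)|
                  + |Wd a T N (L N) j * (∑ k, vecMul (Wd a T N (L N)) (Ed ξ φ (L N) (K N)) k * Wd a T N (K N) k)| :=
                  abs_add_le _ _
              _ ≤ P * C₁ + a ^ T * ((K N : ℝ) * (C₁ * a ^ T)) := by
                  apply add_le_add
                  · rw [abs_mul, abs_of_nonneg hPpos.le]
                    exact mul_le_mul_of_nonneg_left hX1 hPpos.le
                  · rw [abs_mul]
                    exact mul_le_mul huj hX2 (abs_nonneg _) (by positivity)
          have t2 : |δ ^ 2 * (∑ k, vecMul (Wd a T N (L N)) (Ed ξ φ (L N) (K N)) k * Ed ξ φ (L N) (K N) j k)|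
              ≤ δ ^ 2 * ((K N : ℝ) * C₁) := by
            rw [abs_mul, abs_of_nonneg (sq_nonneg δ)]
            exact mul_le_mul_of_nonneg_left hX3 (sq_nonneg δ)
          calc _ ≤ _ + _ := abs_add_le _ _
            _ ≤ _ := add_le_add t1 t2
      _ ≤ |δ| * (P * C₁ + (K N : ℝ) * (C₁ * (a ^ T) ^ 2)) + δ ^ 2 * ((K N : ℝ) * C₁) := by
          apply add_le_add_left
          apply mul_le_mul_of_nonneg_left _ (abs_nonneg δ)
          apply add_le_add_right
          nlinarith [hC₁pos, hKlow, hβpos, hNpos]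
  -- assemble
  rw [key_mul]
  set Q := normSq (Wd a T N (K N)) with hQdef
  have hmain : specNorm ((P ^ 2 * Q)⁻¹ •
      vecMulVec (Wd a T N (L N)) (vecMul (Wd a T N (L N)) (Bmat a T ξ φ δ N (L N) (K N))))
      ≤ (P ^ 2 * Q)⁻¹ * Real.sqrt P * (Real.sqrt (L N) * D) := by
    calc specNorm _ ≤ (P ^ 2 * Q)⁻¹ * Real.sqrt P
          * Real.sqrt (normSq (vecMul (Wd a T N (L N)) (Bmat a T ξ φ δ N (L N) (K N)))) :=
          specNorm_smul_vecMulVec_le _ (by positivity) _ _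
      _ ≤ _ := by
          apply mul_le_mul_of_nonneg_left (normSq_sqrt_le _ hDnn hcomp) (by positivity)
  refine le_trans hmain ?_
  -- final arithmetic
  have hsqrt : Real.sqrt P * Real.sqrt (L N) ≤ P := by
    calc Real.sqrt P * Real.sqrt (L N) ≤ Real.sqrt P * Real.sqrt P :=
          mul_le_mul_of_nonneg_left (Real.sqrt_le_sqrt hP_ge) (Real.sqrt_nonneg _)
      _ = P := Real.mul_self_sqrt hPpos.le
  have step1 : (P ^ 2 * Q)⁻¹ * Real.sqrt P * (Real.sqrt (L N) * D) ≤ D / (P * Q) := by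
    have e1 : (P ^ 2 * Q)⁻¹ * Real.sqrt P * (Real.sqrt (L N) * D)
        = (Real.sqrt P * Real.sqrt (L N)) * D / (P ^ 2 * Q) := by ring
    have e2 : D / (P * Q) = P * D / (P ^ 2 * Q) := by
      field_simp
    rw [e1, e2]
    gcongr
  have hPQ : β * N * (β * N) ≤ P * Q := by
    have h1 : (L N : ℝ) * K N ≤ P * Q :=
      mul_le_mul hP_ge hQ_ge (by positivity) hPpos.le
    have h2 : β * N * (β * N) ≤ (L N : ℝ) * K N :=
      mul_le_mul hLlow hKlow hβN.le (by positivity)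
    linarith
  have hD_le : D ≤ 2 * (a ^ T) ^ 2 * C₁ * N * (|δ| + δ ^ 2) := by
    have hKN : (K N : ℝ) ≤ N := by exact_mod_cast hKleN
    have hLN : (L N : ℝ) ≤ N := by exact_mod_cast hLleN
    have hPN : P ≤ N * (a ^ T) ^ 2 := le_trans hP_le (by nlinarith)
    have b1 : |δ| * (P * C₁) ≤ |δ| * (N * (a ^ T) ^ 2 * C₁) := by
      have : P * C₁ ≤ N * (a ^ T) ^ 2 * C₁ := mul_le_mul_of_nonneg_right hPN hC₁pos.le
      exact mul_le_mul_of_nonneg_left this (abs_nonneg δ)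
    have b2 : |δ| * ((K N : ℝ) * (C₁ * (a ^ T) ^ 2)) ≤ |δ| * (N * (C₁ * (a ^ T) ^ 2)) := by
      have : (K N : ℝ) * (C₁ * (a ^ T) ^ 2) ≤ N * (C₁ * (a ^ T) ^ 2) :=
        mul_le_mul_of_nonneg_right hKN (by positivity)
      exact mul_le_mul_of_nonneg_left this (abs_nonneg δ)
    have b3 : δ ^ 2 * ((K N : ℝ) * C₁) ≤ δ ^ 2 * (N * C₁) := by
      have : (K N : ℝ) * C₁ ≤ N * C₁ := mul_le_mul_of_nonneg_right hKN hC₁pos.le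
      exact mul_le_mul_of_nonneg_left this (sq_nonneg δ)
    have b4 : δ ^ 2 * (N * C₁) ≤ δ ^ 2 * (N * C₁ * (2 * (a ^ T) ^ 2)) := by
      have h1 : (1:ℝ) ≤ 2 * (a ^ T) ^ 2 := by nlinarith
      have h2 : (0:ℝ) ≤ N * C₁ := by positivity
      exact mul_le_mul_of_nonneg_left (le_mul_of_one_le_right h2 h1) (sq_nonneg δ)
    rw [hDdef]
    have expand : |δ| * (P * C₁ + (K N : ℝ) * (C₁ * (a ^ T) ^ 2))
        = |δ| * (P * C₁) + |δ| * ((K N : ℝ) * (C₁ * (a ^ T) ^ 2)) := by ring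
    rw [expand]
    linarith [b1, b2, b3, b4]
  have step2 : D / (P * Q) ≤ D / (β * N * (β * N)) := by
    gcongr
  have step3 : D / (β * N * (β * N)) ≤ 2 * (a ^ T) ^ 2 * C₁ / β ^ 2 * (|δ| + δ ^ 2) / N := by
    have e : 2 * (a ^ T) ^ 2 * C₁ / β ^ 2 * (|δ| + δ ^ 2) / N
        = (2 * (a ^ T) ^ 2 * C₁ * N * (|δ| + δ ^ 2)) / (β * N * (β * N)) := by
      field_simp
    rw [e]
    gcongr
  linarith [step1, step2, step3]
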